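/- arXiv:1501.05197 — 2 statements merged into one kernel-verified Lean document; each statement's English description precedes it below -/
import Mathlib

section
/- Let T be a tree and v a regular core of T. Then every subtree of a neighbor of v that contains a regular core must contain a main core. -/
set_option linter.unusedSectionVars false


open SimpleGraph

variable {V : Type*} [Fintype V] [DecidableEq V]

/-- A vertex `τ` separates `u` and `w` if its distances to them differ. -/
def Separates (T : SimpleGraph V) (τ u w : V) : Prop :=
  T.dist τ u ≠ T.dist τ w

/-- There are at least two vertices of `L` separating `u` and `w`. -/
def HasTwoSeparators (T : SimpleGraph V) (L : Set V) (u w : V) : Prop :=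
  ∃ τ₁ ∈ L, ∃ τ₂ ∈ L, τ₁ ≠ τ₂ ∧ Separates T τ₁ u w ∧ Separates T τ₂ u w

/-- `L` is a landmark set (non-landmarks model, `k = 2`): every pair of distinct
vertices outside `L` is separated by at least two vertices of `L`. -/
def IsLandmarkSet (T : SimpleGraph V) (L : Set V) : Prop :=
  ∀ u w : V, u ≠ w → u ∉ L → w ∉ L → HasTwoSeparators T L u w

/-- A core is a vertex of degree at least 3. -/
def IsCore (T : SimpleGraph V) [DecidableRel T.Adj] (v : V) : Prop :=
  3 ≤ T.degree v

/-- The subtree of the neighbor `x` of `v`: in a tree, the connected component of `x`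
obtained by removing `v`, characterized via distances (`w` is in it iff the path from
`v` to `w` passes through `x`). -/
def Branch (T : SimpleGraph V) (v x : V) : Set V :=
  {w | T.dist v w = T.dist x w + 1}

/-- The subtree of the neighbor `x` of `v` is a (standard) leg:
a path containing no cores. -/
def IsStandardLeg (T : SimpleGraph V) [DecidableRel T.Adj] (v x : V) : Prop :=
  T.Adj v x ∧ ∀ w ∈ Branch T v x, T.degree w ≤ 2

/-- A short leg consists of a single vertex. -/
def IsShortLeg (T : SimpleGraph V) [DecidableRel T.Adj] (v x : V) : Prop :=
  IsStandardLeg T v x ∧ Branch T v x = {x}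

/-- A long leg is a standard leg that is not short. -/
def IsLongLeg (T : SimpleGraph V) [DecidableRel T.Adj] (v x : V) : Prop :=
  IsStandardLeg T v x ∧ Branch T v x ≠ {x}

/-- A small core: degree exactly 3, with at least two standard legs, one of which is short. -/
def IsSmallCore (T : SimpleGraph V) [DecidableRel T.Adj] (v : V) : Prop :=
  T.degree v = 3 ∧ ∃ x y : V, x ≠ y ∧ IsShortLeg T v x ∧ IsStandardLeg T v y

/-- A regular core is a core that is not small. -/
def IsRegularCore (T : SimpleGraph V) [DecidableRel T.Adj] (v : V) : Prop :=
  IsCore T v ∧ ¬ IsSmallCore T v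

/-- A modified leg of `v`: a subtree of a neighbor of `v` containing exactly one core,
which is a small core. -/
def IsModifiedLeg (T : SimpleGraph V) [DecidableRel T.Adj] (v x : V) : Prop :=
  T.Adj v x ∧ ∃ u ∈ Branch T v x, IsSmallCore T u ∧
    ∀ w ∈ Branch T v x, IsCore T w → w = u

/-- A g-leg is a standard leg or a modified leg. -/
def IsGLeg (T : SimpleGraph V) [DecidableRel T.Adj] (v x : V) : Prop :=
  IsStandardLeg T v x ∨ IsModifiedLeg T v x

/-- A minor core: a regular core which either (i) has at most one g-leg, or
(ii) has degree at least 4, no modified legs, exactly two standard legs one of which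
is short, and every other subtree of a neighbor contains a regular core. -/
def IsMinorCore (T : SimpleGraph V) [DecidableRel T.Adj] (v : V) : Prop :=
  IsRegularCore T v ∧
  ((∀ x y : V, IsGLeg T v x → IsGLeg T v y → x = y) ∨
   (4 ≤ T.degree v ∧ (∀ x : V, ¬ IsModifiedLeg T v x) ∧
    (∃ x y : V, x ≠ y ∧ IsShortLeg T v x ∧ IsStandardLeg T v y ∧
      ∀ z : V, IsStandardLeg T v z → z = x ∨ z = y) ∧
    (∀ z : V, T.Adj v z → ¬ IsGLeg T v z → ∃ w ∈ Branch T v z, IsRegularCore T w)))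

/-- A main core is a regular core that is not minor. -/
def IsMainCore (T : SimpleGraph V) [DecidableRel T.Adj] (v : V) : Prop :=
  IsRegularCore T v ∧ ¬ IsMinorCore T v

/-- The vertices lying on g-legs of `v`. -/
def GLegVerts (T : SimpleGraph V) [DecidableRel T.Adj] (v : V) : Set V :=
  {w | ∃ x : V, IsGLeg T v x ∧ w ∈ Branch T v x}

/-- Type (s,0) solution on the leg of neighbor `x` of `v`: the empty set. -/
def SolS0 (T : SimpleGraph V) (v x : V) (S : Set V) : Prop :=
  S ∩ Branch T v x = ∅

/-- Type (s,1) solution: one vertex of the leg whose position is at least 2. -/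
def SolS1 (T : SimpleGraph V) (v x : V) (S : Set V) : Prop :=
  ∃ w : V, S ∩ Branch T v x = {w} ∧ 2 ≤ T.dist v w

/-- Type (s,2) solution: at least two vertices of the leg. -/
def SolS2 (T : SimpleGraph V) (v x : V) (S : Set V) : Prop :=
  ∃ w₁ ∈ S ∩ Branch T v x, ∃ w₂ ∈ S ∩ Branch T v x, w₁ ≠ w₂

/-- Type (s,3) solution: exactly the vertex with position 1 (that is, `x`). -/
def SolS3 (T : SimpleGraph V) (v x : V) (S : Set V) : Prop :=
  S ∩ Branch T v x = {x}

/-- For a modified leg `x` of `v`: `u` is its small core (at position `T.dist v u`),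
and `a`, `b` are the two vertices at position `T.dist v u + 1`, where `b` is the
vertex of a short leg of `u` (the vertex `ℓ^b`) and `a` is the other one (`ℓ^a`). -/
def MLegPair (T : SimpleGraph V) [DecidableRel T.Adj] (v x u a b : V) : Prop :=
  u ∈ Branch T v x ∧ IsSmallCore T u ∧ a ≠ b ∧
  a ∈ Branch T v x ∧ b ∈ Branch T v x ∧
  T.dist v a = T.dist v u + 1 ∧ T.dist v b = T.dist v u + 1 ∧
  IsShortLeg T u b

/-- Type (m,1) solution on the modified leg `x` of `v`: either `{ℓ^a}` or `{ℓ^b}`. -/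
def SolM1 (T : SimpleGraph V) [DecidableRel T.Adj] (v x : V) (S : Set V) : Prop :=
  ∃ u a b : V, MLegPair T v x u a b ∧
    (S ∩ Branch T v x = {a} ∨ S ∩ Branch T v x = {b})

/-- Type (m,2) solution: contains neither `ℓ^a` nor `ℓ^b`, contains at least two
vertices of positions at least `i + 2`, and no vertex of position `i + 1`. -/
def SolM2 (T : SimpleGraph V) [DecidableRel T.Adj] (v x : V) (S : Set V) : Prop :=
  ∃ u a b : V, MLegPair T v x u a b ∧ a ∉ S ∧ b ∉ S ∧
    (∃ w₁ ∈ S ∩ Branch T v x, ∃ w₂ ∈ S ∩ Branch T v x, w₁ ≠ w₂ ∧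
      T.dist v u + 2 ≤ T.dist v w₁ ∧ T.dist v u + 2 ≤ T.dist v w₂) ∧
    ∀ w ∈ S ∩ Branch T v x, T.dist v w ≠ T.dist v u + 1

/-- Type (m,3) solution: at least two vertices, one of which is `ℓ^a` or `ℓ^b`. -/
def SolM3 (T : SimpleGraph V) [DecidableRel T.Adj] (v x : V) (S : Set V) : Prop :=
  ∃ u a b : V, MLegPair T v x u a b ∧
    (∃ w₁ ∈ S ∩ Branch T v x, ∃ w₂ ∈ S ∩ Branch T v x, w₁ ≠ w₂) ∧
    (a ∈ S ∨ b ∈ S)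

/-- `S` is a local set for the core `v`. -/
def IsLocalSet (T : SimpleGraph V) [DecidableRel T.Adj] (v : V) (S : Set V) : Prop :=
  S ⊆ GLegVerts T v ∧
  -- (1) at most one standard leg has a type (s,0) solution, and every standard leg
  -- has a solution of one of the types (s,0), (s,1), (s,2), (s,3)
  (∀ x y : V, IsStandardLeg T v x → IsStandardLeg T v y → x ≠ y →
    SolS0 T v x S → SolS0 T v y S → False) ∧
  (∀ x : V, IsStandardLeg T v x →
    SolS0 T v x S ∨ SolS1 T v x S ∨ SolS2 T v x S ∨ SolS3 T v x S) ∧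
  -- (2) every modified leg has a solution of type (m,1), (m,2) or (m,3)
  (∀ x : V, IsModifiedLeg T v x →
    SolM1 T v x S ∨ SolM2 T v x S ∨ SolM3 T v x S) ∧
  -- (3) if some standard leg has a type (s,0) solution, no modified leg has type (m,1)
  ((∃ x : V, IsStandardLeg T v x ∧ SolS0 T v x S) →
    ∀ y : V, IsModifiedLeg T v y → ¬ SolM1 T v y S) ∧
  -- (4) if some long leg has a type (s,0) solution, every other long leg has type (s,2)
  (∀ x : V, IsLongLeg T v x → SolS0 T v x S →
    ∀ y : V, IsLongLeg T v y → y ≠ x → SolS2 T v y S) ∧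
  -- (5) if some short leg has a type (s,0) solution, every long leg has type (s,2) or (s,3)
  ((∃ x : V, IsShortLeg T v x ∧ SolS0 T v x S) →
    ∀ y : V, IsLongLeg T v y → SolS2 T v y S ∨ SolS3 T v y S)

/-- A local set is thrifty if its solutions of types (s,2), (m,2) and (m,3)
consist of exactly two vertices each. -/
def IsThrifty (T : SimpleGraph V) [DecidableRel T.Adj] (v : V) (S : Set V) : Prop :=
  (∀ x : V, IsStandardLeg T v x → SolS2 T v x S → (S ∩ Branch T v x).ncard = 2) ∧
  (∀ x : V, IsModifiedLeg T v x → (SolM2 T v x S ∨ SolM3 T v x S) →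
    (S ∩ Branch T v x).ncard = 2)

namespace TreeAux
variable {T : SimpleGraph V}


lemma path_length_eq_dist (hT : T.IsTree) {a b : V} (p : T.Walk a b) (hp : p.IsPath) :
    p.length = T.dist a b := by
  obtain ⟨q, hq, hql⟩ := hT.isConnected.exists_path_of_dist a b
  rw [(hT.existsUnique_path a b).unique hp hq, hql]

lemma dist_add_of_mem_support (hT : T.IsTree) {a b c : V} (p : T.Walk a b) (hp : p.IsPath)
    (hc : c ∈ p.support) : T.dist a b = T.dist a c + T.dist c b := by
  rw [← path_length_eq_dist hT p hp, ← path_length_eq_dist hT _ (hp.takeUntil hc),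
    ← path_length_eq_dist hT _ (hp.dropUntil hc), ← Walk.length_append, p.take_spec hc]

lemma concat_path {a b c : V} {p : T.Walk a b} (hp : p.IsPath) (h : T.Adj b c)
    (hc : c ∉ p.support) : (p.concat h).IsPath := by
  rw [← Walk.isPath_reverse_iff, Walk.reverse_concat]
  exact (Walk.cons_isPath_iff _ _).2 ⟨hp.reverse, by simpa using hc⟩

/-- For any edge (a,b) and vertex c, c is on one of the two sides. -/
lemma sides (hT : T.IsTree) {a b : V} (hab : T.Adj a b) (c : V) :
    T.dist c a = T.dist c b + 1 ∨ T.dist c b = T.dist c a + 1 := by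
  obtain ⟨p, hp, hpl⟩ := hT.isConnected.exists_path_of_dist c a
  by_cases hb : b ∈ p.support
  · left
    rw [dist_add_of_mem_support hT p hp hb, T.dist_comm (u := b) (v := a),
      dist_eq_one_iff_adj.2 hab]
  · right
    rw [← path_length_eq_dist hT _ (concat_path hp hab hb), Walk.length_concat, hpl]

lemma exists_parent (hT : T.IsTree) {a w : V} (h : a ≠ w) :
    ∃ t, T.Adj w t ∧ T.dist a t + 1 = T.dist a w := by
  obtain ⟨p, hp, hpl⟩ := hT.isConnected.exists_path_of_dist w a
  have hnil : ¬ p.Nil := by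
    rw [Walk.not_nil_iff_lt_length, hpl, T.dist_comm]
    exact hT.isConnected.pos_dist_of_ne h
  obtain ⟨t, hadj, q, rfl⟩ := Walk.not_nil_iff.mp hnil
  have hq : q.IsPath := ((Walk.cons_isPath_iff _ _).mp hp).1
  refine ⟨t, hadj, ?_⟩
  rw [T.dist_comm (u := a) (v := t), ← path_length_eq_dist hT q hq,
    T.dist_comm (u := a) (v := w), ← hpl, Walk.length_cons]

lemma parent_unique (hT : T.IsTree) {v w t z : V} (ht : T.Adj w t) (hz : T.Adj w z)
    (hdt : T.dist v t + 1 = T.dist v w) (hdz : T.dist v z + 1 = T.dist v w) : t = z := by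
  obtain ⟨p, hp, hpl⟩ := hT.isConnected.exists_path_of_dist v t
  obtain ⟨p', hp', hpl'⟩ := hT.isConnected.exists_path_of_dist v z
  have hwp : w ∉ p.support := fun hw => by
    have h1 := dist_add_of_mem_support hT p hp hw
    have h2 : T.dist w t = 1 := dist_eq_one_iff_adj.2 ht
    omega
  have hwp' : w ∉ p'.support := fun hw => by
    have h1 := dist_add_of_mem_support hT p' hp' hw
    have h2 : T.dist w z = 1 := dist_eq_one_iff_adj.2 hz
    omega
  have hq := concat_path hp ht.symm hwp
  have hq' := concat_path hp' hz.symm hwp'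
  have heq := (hT.existsUnique_path v w).unique hq hq'
  have htmem : t ∈ (p'.concat hz.symm).support := by
    rw [← heq, Walk.support_concat]
    simp only [List.concat_eq_append, List.mem_append]
    exact Or.inl p.end_mem_support
  rw [Walk.support_concat] at htmem
  simp only [List.concat_eq_append, List.mem_append, List.mem_singleton] at htmem
  rcases htmem with htmem | htmem
  · have h1 := dist_add_of_mem_support hT p' hp' htmem
    have h2 : T.dist t z = 0 := by omega
    exact ((hT.isConnected t z).dist_eq_zero_iff).mp h2
  · subst htmem
    omega

lemma reach_del (hT : T.IsTree) {w z : V} (hwz : T.Adj w z) :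
    ∀ u, T.dist w u = T.dist z u + 1 → (T.deleteEdges {s(w,z)}).Reachable z u := by
  suffices H : ∀ n u, T.dist z u = n → T.dist w u = n + 1 →
      (T.deleteEdges {s(w,z)}).Reachable z u by
    intro u h
    exact H _ u rfl h
  intro n
  induction n with
  | zero =>
    intro u h0 _
    rw [(hT.isConnected z u).dist_eq_zero_iff] at h0
    exact h0 ▸ Reachable.refl z
  | succ n ih =>
    intro u hzu hwu
    have hzune : z ≠ u := fun h => by rw [h, T.dist_self] at hzu; omega
    obtain ⟨u', hadj, hd⟩ := exists_parent hT hzune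
    have hwz1 : T.dist w z = 1 := dist_eq_one_iff_adj.2 hwz
    have ht1 : T.dist w u' ≤ T.dist w z + T.dist z u' := hT.isConnected.dist_triangle
    have ht2 : T.dist w u ≤ T.dist w u' + T.dist u' u := hT.isConnected.dist_triangle
    have hu'u : T.dist u' u = 1 := dist_eq_one_iff_adj.2 hadj.symm
    have hwu' : T.dist w u' = n + 1 := by omega
    have hr := ih u' (by omega) hwu'
    have hadj' : (T.deleteEdges {s(w,z)}).Adj u' u := by
      rw [SimpleGraph.deleteEdges_adj]
      refine ⟨hadj.symm, ?_⟩
      intro hmem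
      simp only [Set.mem_singleton_iff, Sym2.eq, Sym2.rel_iff', Prod.mk.injEq, Prod.swap_prod_mk]
        at hmem
      rcases hmem with ⟨rfl, rfl⟩ | ⟨rfl, rfl⟩
      · rw [T.dist_self] at hzu; omega
      · rw [T.dist_self] at hwu; omega
    exact hr.trans hadj'.reachable

lemma branch_dist_add (hT : T.IsTree) {w z : V} (hwz : T.Adj w z) {v : V}
    (hv : T.dist v z = T.dist v w + 1) {u : V} (hu : T.dist w u = T.dist z u + 1) :
    T.dist v u = T.dist v w + T.dist w u := by
  obtain ⟨p, hp, hpl⟩ := hT.isConnected.exists_path_of_dist v u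
  by_cases hw : w ∈ p.support
  · exact dist_add_of_mem_support hT p hp hw
  by_cases hz : z ∈ p.support
  · have h1 := dist_add_of_mem_support hT p hp hz
    omega
  -- p avoids the edge s(w,z)
  exfalso
  have hedge : s(w,z) ∉ p.edges := fun he => hw (p.fst_mem_support_of_mem_edges he)
  have hvu : (T.deleteEdges {s(w,z)}).Reachable v u :=
    ⟨p.toDeleteEdges _ (fun e he => by
      simp only [Set.mem_singleton_iff]
      rintro rfl
      exact hedge he)⟩
  have hzu : (T.deleteEdges {s(w,z)}).Reachable z u := reach_del hT hwz u hu
  have hwv : (T.deleteEdges {s(w,z)}).Reachable w v := by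
    have := reach_del hT hwz.symm v (by
      rw [show T.dist z v = T.dist v z from T.dist_comm, show T.dist w v = T.dist v w from T.dist_comm]
      exact hv)
    rwa [Sym2.eq_swap] at this
  have hbr : T.IsBridge s(w,z) := (isAcyclic_iff_forall_adj_isBridge.mp hT.IsAcyclic) hwz
  rw [isBridge_iff] at hbr
  exact hbr ((hwv.trans hvu).trans (hzu.symm))

lemma exists_meet {r a b : V} (p : T.Walk r a) (q : T.Walk r b) :
    ∃ c, c ∈ p.support ∧ c ∈ q.support ∧
      ∀ d, d ∈ p.support → d ∈ q.support → T.dist r d ≤ T.dist r c := by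
  classical
  let s : Finset V := p.support.toFinset ∩ q.support.toFinset
  have hne : s.Nonempty := ⟨r, by simp [s, p.start_mem_support, q.start_mem_support]⟩
  obtain ⟨c, hc, hmax⟩ := s.exists_max_image (fun d => T.dist r d) hne
  simp only [s, Finset.mem_inter, List.mem_toFinset] at hc
  exact ⟨c, hc.1, hc.2, fun d h1 h2 => hmax d (by simp [s, h1, h2])⟩

lemma exists_succ (hT : T.IsTree) {a b c : V} (p : T.Walk a b) (hp : p.IsPath)
    (hc : c ∈ p.support) (hcb : c ≠ b) :
    ∃ n, T.Adj c n ∧ n ∈ p.support ∧ T.dist c b = T.dist n b + 1 ∧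
      T.dist a n = T.dist a c + 1 := by
  have hq : (p.dropUntil c hc).IsPath := hp.dropUntil hc
  have hql : (p.dropUntil c hc).length = T.dist c b := path_length_eq_dist hT _ hq
  have hnil : ¬ (p.dropUntil c hc).Nil := by
    rw [Walk.not_nil_iff_lt_length, hql]
    exact hT.isConnected.pos_dist_of_ne hcb
  obtain ⟨n, hadj, q', hq'eq⟩ := Walk.not_nil_iff.mp hnil
  have hnsupp : n ∈ (p.dropUntil c hc).support := by rw [hq'eq]; simp
  have hnp : n ∈ p.support := p.support_dropUntil_subset hc hnsupp
  have hq'p : q'.IsPath := by rw [hq'eq] at hq; exact ((Walk.cons_isPath_iff _ _).mp hq).1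
  have hq'l : q'.length = T.dist n b := path_length_eq_dist hT _ hq'p
  have hlen : (p.dropUntil c hc).length = q'.length + 1 := by rw [hq'eq, Walk.length_cons]
  have h4 : T.dist c b = T.dist n b + 1 := by omega
  refine ⟨n, hadj, hnp, h4, ?_⟩
  have h5 := dist_add_of_mem_support hT p hp hc
  have h6 := dist_add_of_mem_support hT p hp hnp
  omega

lemma small_structure (hT : T.IsTree) [DecidableRel T.Adj] {u tu r₀ : V} (hu : IsSmallCore T u)
    (ht : T.Adj u tu) (hr₀ : r₀ ∈ Branch T u tu) (hr₀deg : 3 ≤ T.degree r₀) :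
    ∀ n, T.Adj u n → n = tu ∨ ∀ r ∈ Branch T u n, T.degree r ≤ 2 := by
  obtain ⟨hdeg3, x₀, y₀, hxy, hx₀, hy₀⟩ := hu
  have hx₀leg := hx₀.1
  have htx : tu ≠ x₀ := fun h => by
    subst h; have := hx₀leg.2 r₀ hr₀; omega
  have hty : tu ≠ y₀ := fun h => by
    subst h; have := hy₀.2 r₀ hr₀; omega
  have hsub : ({x₀, y₀, tu} : Finset V) ⊆ T.neighborFinset u := by
    intro n hn
    simp only [Finset.mem_insert, Finset.mem_singleton] at hn
    rw [mem_neighborFinset]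
    rcases hn with rfl | rfl | rfl
    · exact hx₀leg.1
    · exact hy₀.1
    · exact ht
  have hcard : ({x₀, y₀, tu} : Finset V).card = 3 := by
    rw [Finset.card_insert_of_notMem (by simp [hxy, htx.symm]),
      Finset.card_insert_of_notMem (by simp [hty.symm]), Finset.card_singleton]
  have heq : T.neighborFinset u = {x₀, y₀, tu} :=
    (Finset.eq_of_subset_of_card_le hsub (by
      rw [hcard, card_neighborFinset_eq_degree, hdeg3])).symm
  intro n hn
  have hnmem : n ∈ ({x₀, y₀, tu} : Finset V) := heq ▸ (mem_neighborFinset _ _ _).2 hn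
  simp only [Finset.mem_insert, Finset.mem_singleton] at hnmem
  rcases hnmem with rfl | rfl | rfl
  · exact Or.inr hx₀leg.2
  · exact Or.inr hy₀.2
  · exact Or.inl rfl

end TreeAux

/-- every subtree of a neighbor of a regular core that contains a
regular core must contain a main core. -/
theorem subtree_with_regular_core_has_main_core
    (T : SimpleGraph V) [DecidableRel T.Adj] (hT : T.IsTree)
    (v : V) (hv : IsRegularCore T v) :
    ∀ x : V, T.Adj v x → (∃ w ∈ Branch T v x, IsRegularCore T w) →
      ∃ w ∈ Branch T v x, IsMainCore T w := by
  classical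
  intro x hvx hex
  obtain ⟨w₀, hw₀b, hw₀r⟩ := hex
  obtain ⟨w, hwP, hwmax⟩ := Set.exists_max_image {u | u ∈ Branch T v x ∧ IsRegularCore T u}
      (fun u => T.dist v u) (Set.toFinite _) ⟨w₀, hw₀b, hw₀r⟩
  obtain ⟨hwb, hwreg⟩ := hwP
  refine ⟨w, hwb, hwreg, ?_⟩
  intro hmin
  have hco := hT.isConnected
  have hdw : T.dist v w = T.dist x w + 1 := hwb
  have hvne : v ≠ w := by
    intro h; rw [← h, T.dist_self] at hdw; omega
  obtain ⟨t, htadj, htd⟩ := TreeAux.exists_parent hT hvne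
  have hvcore : 3 ≤ T.degree v := hv.1
  have hwcore : 3 ≤ T.degree w := hwreg.1
  have hdx1 : T.dist v x = 1 := dist_eq_one_iff_adj.2 hvx
  have hchild : ∀ z, T.Adj w z → z ≠ t → T.dist v z = T.dist v w + 1 := by
    intro z hz hzt
    rcases TreeAux.sides hT hz v with h | h
    · exact absurd (TreeAux.parent_unique hT htadj hz htd (by omega)) (Ne.symm hzt)
    · exact h
  have hsub : ∀ z, T.Adj w z → z ≠ t → ∀ u ∈ Branch T w z,
      u ∈ Branch T v x ∧ T.dist v w < T.dist v u := by
    intro z hz hzt u hu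
    have hu' : T.dist w u = T.dist z u + 1 := hu
    have hdvz := hchild z hz hzt
    have h1 : T.dist v u = T.dist v w + T.dist w u := TreeAux.branch_dist_add hT hz hdvz hu'
    have hxz : T.dist x z = T.dist x w + 1 := by
      rcases TreeAux.sides hT hz x with h | h
      · have ht1 : T.dist v z ≤ T.dist v x + T.dist x z := hco.dist_triangle
        omega
      · exact h
    have h2 : T.dist x u = T.dist x w + T.dist w u := TreeAux.branch_dist_add hT hz hxz hu'
    exact ⟨show T.dist v u = T.dist x u + 1 by omega, by omega⟩
  have hnoreg : ∀ z, T.Adj w z → z ≠ t → ∀ u ∈ Branch T w z, ¬ IsRegularCore T u := by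
    intro z hz hzt u hu hur
    obtain ⟨hub, hlt⟩ := hsub z hz hzt u hu
    have := hwmax u ⟨hub, hur⟩
    omega
  have hsmall : ∀ z, T.Adj w z → z ≠ t → ∀ u ∈ Branch T w z, 3 ≤ T.degree u →
      IsSmallCore T u := by
    intro z hz hzt u hu hdeg
    by_contra hns
    exact hnoreg z hz hzt u hu ⟨hdeg, hns⟩
  have hvmem : v ∈ Branch T w t := by
    show T.dist w v = T.dist t v + 1
    rw [show T.dist w v = T.dist v w from T.dist_comm,
      show T.dist t v = T.dist v t from T.dist_comm]
    omega
  have htnotstd : ¬ IsStandardLeg T w t := fun h => by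
    have := h.2 v hvmem; omega
  -- every non-parent branch of w is a g-leg
  have hgleg : ∀ z, T.Adj w z → z ≠ t → IsGLeg T w z := by
    intro z hz hzt
    by_cases hcor : ∃ u ∈ Branch T w z, 3 ≤ T.degree u
    · obtain ⟨u, hub, hudeg⟩ := hcor
      have husmall := hsmall z hz hzt u hub hudeg
      refine Or.inr ⟨hz, u, hub, husmall, ?_⟩
      have key : ∀ s r : V, s ∈ Branch T w z → IsSmallCore T s → 3 ≤ T.degree r → r ≠ s →
          T.dist w r = T.dist w s + T.dist s r → False := by
        intro s r hsb hss hrdeg hrs hsum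
        have hsb' : T.dist w s = T.dist z s + 1 := hsb
        have hwsne : w ≠ s := by
          intro h; rw [← h, T.dist_self] at hsb'; omega
        obtain ⟨ts, htsadj, htsd⟩ := TreeAux.exists_parent hT hwsne
        have hwmem : w ∈ Branch T s ts := by
          show T.dist s w = T.dist ts w + 1
          rw [show T.dist s w = T.dist w s from T.dist_comm,
            show T.dist ts w = T.dist w ts from T.dist_comm]
          omega
        have hstr := TreeAux.small_structure hT hss htsadj hwmem hwcore
        obtain ⟨n, hnadj, hnd⟩ := TreeAux.exists_parent hT hrs
        have hrmem : r ∈ Branch T s n := by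
          show T.dist s r = T.dist n r + 1
          rw [show T.dist s r = T.dist r s from T.dist_comm,
            show T.dist n r = T.dist r n from T.dist_comm]
          omega
        rcases hstr n hnadj with rfl | hleg
        · have ht1 : T.dist w r ≤ T.dist w n + T.dist n r := hco.dist_triangle
          have h2 : T.dist s r = T.dist n r + 1 := hrmem
          omega
        · have := hleg r hrmem
          omega
      intro u' hu'b hu'core
      by_contra hne
      have hu'core' : 3 ≤ T.degree u' := hu'core
      -- shortest paths from w through z to u and u'
      have hwz1 : T.dist z w = 1 := by
        rw [show T.dist z w = T.dist w z from T.dist_comm]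
        exact dist_eq_one_iff_adj.2 hz
      obtain ⟨p₀, hp₀, hp₀l⟩ := hco.exists_path_of_dist z u
      obtain ⟨q₀, hq₀, hq₀l⟩ := hco.exists_path_of_dist z u'
      have hub' : T.dist w u = T.dist z u + 1 := hub
      have hu'b' : T.dist w u' = T.dist z u' + 1 := hu'b
      have hwp₀ : w ∉ p₀.support := by
        intro hw
        have := TreeAux.dist_add_of_mem_support hT p₀ hp₀ hw
        omega
      have hwq₀ : w ∉ q₀.support := by
        intro hw
        have := TreeAux.dist_add_of_mem_support hT q₀ hq₀ hw
        omega
      have hp : (Walk.cons hz p₀).IsPath := (Walk.cons_isPath_iff _ _).2 ⟨hp₀, hwp₀⟩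
      have hq : (Walk.cons hz q₀).IsPath := (Walk.cons_isPath_iff _ _).2 ⟨hq₀, hwq₀⟩
      have hzp : z ∈ (Walk.cons hz p₀).support := by
        rw [Walk.support_cons]
        exact List.mem_cons_of_mem _ p₀.start_mem_support
      have hzq : z ∈ (Walk.cons hz q₀).support := by
        rw [Walk.support_cons]
        exact List.mem_cons_of_mem _ q₀.start_mem_support
      obtain ⟨c, hcp, hcq, hcmax⟩ := TreeAux.exists_meet (Walk.cons hz p₀) (Walk.cons hz q₀)
      have hdu : T.dist w u = T.dist w c + T.dist c u :=
        TreeAux.dist_add_of_mem_support hT _ hp hcp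
      have hdu' : T.dist w u' = T.dist w c + T.dist c u' :=
        TreeAux.dist_add_of_mem_support hT _ hq hcq
      have hc1 : 1 ≤ T.dist w c := by
        have h1 := hcmax z hzp hzq
        have h2 : T.dist w z = 1 := dist_eq_one_iff_adj.2 hz
        omega
      have hcw : c ≠ w := by
        intro h; rw [h, T.dist_self] at hc1; omega
      have hcb : c ∈ Branch T w z := by
        show T.dist w c = T.dist z c + 1
        have hcp' : c ∈ w :: p₀.support := by rwa [Walk.support_cons] at hcp
        rcases List.mem_cons.mp hcp' with h | h
        · exact absurd h hcw
        · have := TreeAux.dist_add_of_mem_support hT p₀ hp₀ h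
          omega
      by_cases hcu : c = u
      · rw [hcu] at hdu'
        exact key u u' hub husmall hu'core' (fun h => hne h) hdu'
      by_cases hcu' : c = u'
      · rw [hcu'] at hdu
        exact key u' u hu'b (hsmall z hz hzt u' hu'b hu'core') hudeg
          (fun h => hne h.symm) hdu
      obtain ⟨n₁, hn₁adj, hn₁p, hn₁d, hn₁w⟩ := TreeAux.exists_succ hT _ hp hcp hcu
      obtain ⟨n₂, hn₂adj, hn₂q, hn₂d, hn₂w⟩ := TreeAux.exists_succ hT _ hq hcq hcu'
      have hn12 : n₁ ≠ n₂ := by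
        intro h
        have := hcmax n₁ hn₁p (h ▸ hn₂q)
        omega
      obtain ⟨tc, htcadj, htcd⟩ := TreeAux.exists_parent hT (Ne.symm hcw)
      have hdegc : 3 ≤ T.degree c := by
        have hsub3 : ({tc, n₁, n₂} : Finset V) ⊆ T.neighborFinset c := by
          intro m hm
          simp only [Finset.mem_insert, Finset.mem_singleton] at hm
          rw [T.mem_neighborFinset]
          rcases hm with rfl | rfl | rfl
          · exact htcadj
          · exact hn₁adj
          · exact hn₂adj
        have hc3 : ({tc, n₁, n₂} : Finset V).card = 3 := by
          rw [Finset.card_insert_of_notMem (by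
              simp only [Finset.mem_insert, Finset.mem_singleton, not_or]
              refine ⟨?_, ?_⟩ <;> rintro rfl <;> omega),
            Finset.card_insert_of_notMem (by simpa using hn12), Finset.card_singleton]
        calc 3 = ({tc, n₁, n₂} : Finset V).card := hc3.symm
          _ ≤ (T.neighborFinset c).card := Finset.card_le_card hsub3
          _ = T.degree c := card_neighborFinset_eq_degree _ _
      have hcsmall : IsSmallCore T c := hsmall z hz hzt c hcb hdegc
      have hwmem : w ∈ Branch T c tc := by
        show T.dist c w = T.dist tc w + 1
        rw [show T.dist c w = T.dist w c from T.dist_comm,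
          show T.dist tc w = T.dist w tc from T.dist_comm]
        omega
      have hstr := TreeAux.small_structure hT hcsmall htcadj hwmem hwcore
      rcases hstr n₁ hn₁adj with rfl | hleg
      · omega
      · have humem : u ∈ Branch T c n₁ := hn₁d
        have := hleg u humem
        omega
    · push_neg at hcor
      exact Or.inl ⟨hz, fun r hr => by have := hcor r hr; omega⟩
  rcases hmin.2 with h1 | h2
  · -- case (i): at most one g-leg; but w has at least two non-parent neighbors
    have hcard : 2 ≤ (T.neighborFinset w |>.erase t).card := by
      have : t ∈ T.neighborFinset w := (T.mem_neighborFinset w t).2 htadj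
      rw [Finset.card_erase_of_mem this, card_neighborFinset_eq_degree]
      omega
    obtain ⟨z₁, hz₁, z₂, hz₂, hz12⟩ := Finset.one_lt_card.mp hcard
    obtain ⟨hz₁t, hz₁adj⟩ := Finset.mem_erase.mp hz₁
    obtain ⟨hz₂t, hz₂adj⟩ := Finset.mem_erase.mp hz₂
    rw [T.mem_neighborFinset] at hz₁adj hz₂adj
    exact hz12 (h1 z₁ z₂ (hgleg z₁ hz₁adj hz₁t) (hgleg z₂ hz₂adj hz₂t))
  · -- case (ii)
    obtain ⟨hdeg4, hnomod, ⟨x₁, y₁, hxy, hx₁, hy₁, huniq⟩, hother⟩ := h2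
    have htx₁ : t ≠ x₁ := fun h => htnotstd (h ▸ hx₁.1)
    have hty₁ : t ≠ y₁ := fun h => htnotstd (h ▸ hy₁)
    have hsub3 : ({t, x₁, y₁} : Finset V) ⊆ T.neighborFinset w := by
      intro n hn
      simp only [Finset.mem_insert, Finset.mem_singleton] at hn
      rw [T.mem_neighborFinset]
      rcases hn with rfl | rfl | rfl
      · exact htadj
      · exact hx₁.1.1
      · exact hy₁.1
    have hcard3 : ({t, x₁, y₁} : Finset V).card ≤ 3 := by
      apply le_trans (Finset.card_insert_le _ _)
      have := Finset.card_insert_le x₁ ({y₁} : Finset V)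
      simp at this ⊢
      omega
    have : (T.neighborFinset w \ {t, x₁, y₁}).Nonempty := by
      rw [← Finset.card_pos, Finset.card_sdiff_of_subset hsub3, card_neighborFinset_eq_degree]
      omega
    obtain ⟨z, hzmem⟩ := this
    obtain ⟨hznbr, hznot⟩ := Finset.mem_sdiff.mp hzmem
    rw [T.mem_neighborFinset] at hznbr
    simp only [Finset.mem_insert, Finset.mem_singleton, not_or] at hznot
    obtain ⟨hzt, hzx₁, hzy₁⟩ := hznot
    have hznotg : ¬ IsGLeg T w z := by
      rintro (hstd | hmod)
      · rcases huniq z hstd with rfl | rfl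
        · exact hzx₁ rfl
        · exact hzy₁ rfl
      · exact hnomod z hmod
    obtain ⟨u, hub, hureg⟩ := hother z hznbr hznotg
    exact hnoreg z hznbr hzt u hub hureg
end

section
/- Let T be a tree that has at least one minor core. Then T has at least two main cores. -/
open SimpleGraph

variable {V : Type*} [Fintype V] [DecidableEq V]

set_option linter.unusedSectionVars false

section TreeAux
variable {T : SimpleGraph V}

private lemma path_len (hT : T.IsTree) {a b : V} {p : T.Walk a b} (hp : p.IsPath) :
    p.length = T.dist a b := by
  obtain ⟨q, hq, hql⟩ := hT.isConnected.exists_path_of_dist a b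
  rw [(hT.existsUnique_path a b).unique hp hq, hql]

private lemma dist_split (hT : T.IsTree) {a b z : V} {p : T.Walk a b} (hp : p.IsPath)
    (hz : z ∈ p.support) : T.dist a z + T.dist z b = T.dist a b := by
  have h1 := path_len hT (hp.takeUntil hz)
  have h2 := path_len hT (hp.dropUntil hz)
  have h3 := congrArg Walk.length (p.take_spec hz)
  rw [Walk.length_append, h1, h2] at h3
  rw [h3, path_len hT hp]

private lemma adj_dist_cases (hT : T.IsTree) {a b : V} (hab : T.Adj a b) (w : V) :
    T.dist a w = T.dist b w + 1 ∨ T.dist b w = T.dist a w + 1 := by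
  obtain ⟨p, hp, hpl⟩ := hT.isConnected.exists_path_of_dist b w
  by_cases ha : a ∈ p.support
  · right
    have hs := dist_split hT hp ha
    have h1 : T.dist b a = 1 := SimpleGraph.dist_eq_one_iff_adj.2 hab.symm
    omega
  · left
    have hcons : (Walk.cons hab p).IsPath := hp.cons ha
    have hl := path_len hT hcons
    rw [Walk.length_cons, hpl] at hl
    omega

private lemma mem_branch_iff {v x w : V} :
    w ∈ Branch T v x ↔ T.dist v w = T.dist x w + 1 := Iff.rfl

private lemma not_mem_branch_iff (hT : T.IsTree) {v x : V} (h : T.Adj v x) (w : V) :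
    w ∉ Branch T v x ↔ w ∈ Branch T x v := by
  have := adj_dist_cases hT h w
  simp only [mem_branch_iff]
  omega

private lemma mem_branch_self {v x : V} (h : T.Adj v x) : x ∈ Branch T v x := by
  simp [mem_branch_iff, SimpleGraph.dist_eq_one_iff_adj.2 h]

private lemma self_not_mem_branch {v x : V} : v ∉ Branch T v x := by
  simp only [mem_branch_iff, SimpleGraph.dist_self]
  omega

private lemma exists_branch_mem (hT : T.IsTree) {a w : V} (hne : a ≠ w) :
    ∃ y, T.Adj a y ∧ w ∈ Branch T a y := by
  obtain ⟨p, hp, hpl⟩ := hT.isConnected.exists_path_of_dist a w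
  cases p with
  | nil => exact absurd rfl hne
  | @cons _ y _ h q =>
      refine ⟨y, h, ?_⟩
      have hq := path_len hT hp.of_cons
      rw [Walk.length_cons, hq] at hpl
      simp only [mem_branch_iff]
      omega

private lemma branch_disjoint (hT : T.IsTree) {a y y' : V} (hy : T.Adj a y) (hy' : T.Adj a y')
    (hne : y ≠ y') {w : V} (h1 : w ∈ Branch T a y) (h2 : w ∈ Branch T a y') : False := by
  rw [mem_branch_iff] at h1 h2
  obtain ⟨q, hq, hql⟩ := hT.isConnected.exists_path_of_dist y w
  obtain ⟨q', hq', hql'⟩ := hT.isConnected.exists_path_of_dist y' w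
  have hl : (Walk.cons hy q).length = T.dist a w := by rw [Walk.length_cons, hql]; omega
  have hl' : (Walk.cons hy' q').length = T.dist a w := by rw [Walk.length_cons, hql']; omega
  have hP := Walk.isPath_of_length_eq_dist _ hl
  have hP' := Walk.isPath_of_length_eq_dist _ hl'
  have heq := (hT.existsUnique_path a w).unique hP hP'
  have h2 := congrArg (fun r => r.getVert 1) heq
  simp only [Walk.getVert_cons _ _ one_ne_zero, Nat.sub_self, Walk.getVert_zero] at h2
  exact hne h2
private lemma dist_triangle' (hT : T.IsTree) (a b c : V) :
    T.dist a c ≤ T.dist a b + T.dist b c :=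
  hT.isConnected.dist_triangle

private lemma branch_dist_add (hT : T.IsTree) {w y : V} (hwy : T.Adj w y) {v : V}
    (hv : v ∉ Branch T w y) {c : V} (hc : c ∈ Branch T w y) :
    T.dist v c = T.dist v w + T.dist w c := by
  rcases eq_or_ne v w with rfl | hvw
  · simp
  have hv' : T.dist y v = T.dist w v + 1 := (not_mem_branch_iff hT hwy v).1 hv
  have hc' : T.dist w c = T.dist y c + 1 := hc
  have hwy1 : T.dist y w = 1 := SimpleGraph.dist_eq_one_iff_adj.2 hwy.symm
  obtain ⟨q, hq, hql⟩ := hT.isConnected.exists_path_of_dist y c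
  have hwq : w ∉ q.support := by
    intro hmem
    have := dist_split hT hq hmem
    omega
  have hr : (Walk.cons hwy q).IsPath := hq.cons hwq
  obtain ⟨p, hp, hpl⟩ := hT.isConnected.exists_path_of_dist v w
  have hdisj : ∀ z ∈ p.support, z ∈ q.support → False := by
    intro z hzp hzq
    have h1 := dist_split hT hp hzp
    have h2 := dist_split hT hq hzq
    have h3 := dist_triangle' hT w z c
    have h4 := dist_triangle' hT y z v
    have h5 := dist_triangle' hT w y z
    have h6 : T.dist z v = T.dist v z := SimpleGraph.dist_comm ..
    have h7 : T.dist z w = T.dist w z := SimpleGraph.dist_comm ..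
    have h8 : T.dist z c = T.dist c z := SimpleGraph.dist_comm ..
    have h9 : T.dist y z = T.dist z y := SimpleGraph.dist_comm ..
    have h10 : T.dist w y = 1 := SimpleGraph.dist_eq_one_iff_adj.2 hwy
    have h11 : T.dist v w = T.dist w v := SimpleGraph.dist_comm ..
    omega
  have hP : (p.append (Walk.cons hwy q)).IsPath := by
    rw [Walk.isPath_def, Walk.support_append, Walk.support_cons, List.tail_cons,
      List.nodup_append]
    exact ⟨hp.support_nodup, hq.support_nodup, fun a ha b hb hab => hdisj a ha (hab ▸ hb)⟩
  have := path_len hT hP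
  rw [Walk.length_append, Walk.length_cons, hpl, hql] at this
  omega

private lemma dist_pos_of_mem_branch (hT : T.IsTree) {v x w : V} (h : w ∈ Branch T v x) :
    1 ≤ T.dist v w := by
  have := h
  rw [mem_branch_iff] at this
  omega

private lemma branch_trans (hT : T.IsTree) {v z : V} (hvz : T.Adj v z) {w : V}
    (hw : w ∈ Branch T v z) {y : V} (hwy : T.Adj w y) (hv : v ∉ Branch T w y) {c : V}
    (hc : c ∈ Branch T w y) :
    c ∈ Branch T v z ∧ T.dist v w < T.dist v c := by
  have hL := branch_dist_add hT hwy hv hc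
  have hwc : 1 ≤ T.dist w c := dist_pos_of_mem_branch hT hc
  have h1 : T.dist v w = T.dist z w + 1 := hw
  have h2 := dist_triangle' hT z w c
  have h3 := dist_triangle' hT v z c
  have h4 : T.dist v z = 1 := SimpleGraph.dist_eq_one_iff_adj.2 hvz
  refine ⟨?_, by omega⟩
  rw [mem_branch_iff]
  omega
private lemma branch_subset (hT : T.IsTree) {a b y : V} (hab : T.Adj a b) (hby : T.Adj b y)
    (hya : y ≠ a) : Branch T b y ⊆ Branch T a b := by
  intro z hz
  have h1 : z ∉ Branch T b a := fun h => branch_disjoint hT hby hab.symm hya hz h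
  exact (not_mem_branch_iff hT hab.symm z).1 h1

private lemma branch_subset' (hT : T.IsTree) {a b y : V} (hab : T.Adj a b) (hby : T.Adj b y)
    (hya : y ≠ a) : Branch T b a ⊆ Branch T y b := by
  intro z hz
  have h1 : z ∉ Branch T b y := fun h => branch_disjoint hT hab.symm hby (Ne.symm hya) hz h
  exact (not_mem_branch_iff hT hby z).1 h1

variable [DecidableRel T.Adj]

private lemma neighbors_of_deg3 {b a x1 x2 : V} (hdeg : T.degree b = 3) (ha : T.Adj b a)
    (h1 : T.Adj b x1) (h2 : T.Adj b x2) (hax1 : a ≠ x1) (hax2 : a ≠ x2) (h12 : x1 ≠ x2)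
    {y : V} (hy : T.Adj b y) : y = a ∨ y = x1 ∨ y = x2 := by
  have hsub : ({a, x1, x2} : Finset V) ⊆ T.neighborFinset b := by
    intro t ht
    simp only [Finset.mem_insert, Finset.mem_singleton] at ht
    rcases ht with rfl | rfl | rfl <;> simpa [SimpleGraph.mem_neighborFinset] using ‹_›
  have hcard : ({a, x1, x2} : Finset V).card = 3 := by
    rw [Finset.card_insert_of_notMem (by simp [hax1, hax2]),
      Finset.card_insert_of_notMem (by simp [h12]), Finset.card_singleton]
  have heq : ({a, x1, x2} : Finset V) = T.neighborFinset b := by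
    apply Finset.eq_of_subset_of_card_le hsub
    rw [hcard, SimpleGraph.card_neighborFinset_eq_degree, hdeg]
  have : y ∈ T.neighborFinset b := (SimpleGraph.mem_neighborFinset ..).2 hy
  rw [← heq] at this
  simpa using this

private lemma neighbors_of_deg2 {b a y : V} (hdeg : T.degree b ≤ 2) (ha : T.Adj b a)
    (h1 : T.Adj b y) (hay : a ≠ y) {z : V} (hz : T.Adj b z) : z = a ∨ z = y := by
  have hsub : ({a, y} : Finset V) ⊆ T.neighborFinset b := by
    intro t ht
    simp only [Finset.mem_insert, Finset.mem_singleton] at ht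
    rcases ht with rfl | rfl <;> simpa [SimpleGraph.mem_neighborFinset] using ‹_›
  have hcard : ({a, y} : Finset V).card = 2 := by
    rw [Finset.card_insert_of_notMem (by simp [hay]), Finset.card_singleton]
  have heq : ({a, y} : Finset V) = T.neighborFinset b := by
    apply Finset.eq_of_subset_of_card_le hsub
    rw [hcard, SimpleGraph.card_neighborFinset_eq_degree]
    exact hdeg
  have : z ∈ T.neighborFinset b := (SimpleGraph.mem_neighborFinset ..).2 hz
  rw [← heq] at this
  simpa using this

private lemma branch_classify (hT : T.IsTree) : ∀ n : ℕ, ∀ a b : V,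
    T.Adj a b → (∃ c ∈ Branch T b a, IsCore T c) → (Branch T a b).ncard ≤ n →
    IsGLeg T a b ∨ ∃ w ∈ Branch T a b, IsRegularCore T w := by
  intro n
  induction n with
  | zero =>
    intro a b hab _ hcard
    have hpos : 0 < (Branch T a b).ncard := (Set.ncard_pos (Set.toFinite _)).2 ⟨b, mem_branch_self hab⟩
    omega
  | succ n ih =>
    intro a b hab hfar hcard
    obtain ⟨cc, hccmem, hcccore⟩ := hfar
    by_cases hleg : ∀ w ∈ Branch T a b, T.degree w ≤ 2
    · exact Or.inl (Or.inl ⟨hab, hleg⟩)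
    by_cases hregex : ∃ w ∈ Branch T a b, IsRegularCore T w
    · exact Or.inr hregex
    push_neg at hleg hregex
    obtain ⟨c0, hc0b, hc0deg⟩ := hleg
    have hsmall : ∀ w ∈ Branch T a b, IsCore T w → IsSmallCore T w := by
      intro w hw hcw
      by_contra hns
      exact hregex w hw ⟨hcw, hns⟩
    have hc0core : IsCore T c0 := by unfold IsCore; omega
    left
    by_cases hbcore : IsCore T b
    · have hbsmall := hsmall b (mem_branch_self hab) hbcore
      obtain ⟨hdeg3, x1, x2, h12, hshort, hstd⟩ := hbsmall
      have hx1deg : ∀ w ∈ Branch T b x1, T.degree w ≤ 2 := hshort.1.2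
      have hx2deg : ∀ w ∈ Branch T b x2, T.degree w ≤ 2 := hstd.2
      have hadj1 : T.Adj b x1 := hshort.1.1
      have hadj2 : T.Adj b x2 := hstd.1
      have hax1 : a ≠ x1 := by
        rintro rfl
        have := hx1deg cc hccmem
        unfold IsCore at hcccore; omega
      have hax2 : a ≠ x2 := by
        rintro rfl
        have := hx2deg cc hccmem
        unfold IsCore at hcccore; omega
      right
      refine ⟨hab, b, mem_branch_self hab, ⟨hdeg3, x1, x2, h12, hshort, hstd⟩, ?_⟩
      intro w hw hwcore
      by_contra hne
      obtain ⟨y, hby, hwy⟩ := exists_branch_mem hT (fun h : b = w => hne h.symm)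
      rcases neighbors_of_deg3 hdeg3 hab.symm hadj1 hadj2 hax1 hax2 h12 hby with rfl | rfl | rfl
      · exact ((not_mem_branch_iff hT hab w).2 hwy) hw
      · have := hx1deg w hwy
        unfold IsCore at hwcore; omega
      · have := hx2deg w hwy
        unfold IsCore at hwcore; omega
    · have hbc0 : b ≠ c0 := by rintro rfl; exact hbcore hc0core
      obtain ⟨y, hby, hc0y⟩ := exists_branch_mem hT hbc0
      have hya : y ≠ a := by
        rintro rfl
        exact ((not_mem_branch_iff hT hab c0).2 hc0y) hc0b
      have hsub := branch_subset hT hab hby hya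
      have hsub' := branch_subset' hT hab hby hya
      have hlt : (Branch T b y).ncard < (Branch T a b).ncard := by
        apply Set.ncard_lt_ncard _ (Set.toFinite _)
        refine Set.ssubset_iff_subset_ne.mpr ⟨hsub, ?_⟩
        intro h
        exact self_not_mem_branch (h.symm ▸ mem_branch_self hab)
      rcases ih b y hby ⟨cc, hsub' hccmem, hcccore⟩ (by omega) with hg | ⟨w, hwB, hwreg⟩
      · rcases hg with hstdleg | hmod
        · have := hstdleg.2 c0 hc0y
          unfold IsCore at hc0core; omega
        · obtain ⟨_, u, huB, husm, huniq⟩ := hmod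
          right
          refine ⟨hab, u, hsub huB, husm, ?_⟩
          intro w hw hwcore
          have hwb : b ≠ w := by rintro rfl; exact hbcore hwcore
          obtain ⟨y2, hby2, hwy2⟩ := exists_branch_mem hT hwb
          have hdegb : T.degree b ≤ 2 := by
            by_contra hh
            exact hbcore (by unfold IsCore; omega)
          rcases neighbors_of_deg2 hdegb hab.symm hby (Ne.symm hya) hby2 with rfl | rfl
          · exact absurd hw ((not_mem_branch_iff hT hab w).2 hwy2)
          · exact huniq w hwy2 hwcore
      · exact absurd hwreg (hregex w (hsub hwB))

private lemma core_branch (hT : T.IsTree) {v x : V} (hv : IsCore T v) (hvx : T.Adj v x) :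
    IsGLeg T v x ∨ ∃ w ∈ Branch T v x, IsRegularCore T w :=
  branch_classify hT _ v x hvx ⟨v, mem_branch_self hvx.symm, hv⟩ le_rfl
private lemma minor_needs (hT : T.IsTree) {v : V} (hm : IsMinorCore T v) :
    ∃ y1 y2 : V, y1 ≠ y2 ∧ T.Adj v y1 ∧ T.Adj v y2 ∧
      (∃ w ∈ Branch T v y1, IsRegularCore T w) ∧ ∃ w ∈ Branch T v y2, IsRegularCore T w := by
  obtain ⟨hreg, hcase⟩ := hm
  have hcore := hreg.1
  rcases hcase with h1 | ⟨hdeg4, hnomod, ⟨x, y, hxy, hxs, hys, hall⟩, hrest⟩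
  · have h3 : 2 < (T.neighborFinset v).card := by
      rw [SimpleGraph.card_neighborFinset_eq_degree]; exact hcore
    obtain ⟨a, b, c, ha, hb, hc, hab, hac, hbc⟩ := Finset.two_lt_card_iff.1 h3
    rw [SimpleGraph.mem_neighborFinset] at ha hb hc
    have key : ∀ z : V, T.Adj v z → ¬ IsGLeg T v z →
        ∃ w ∈ Branch T v z, IsRegularCore T w := by
      intro z hz hgz
      rcases core_branch hT hcore hz with hg | hh
      · exact absurd hg hgz
      · exact hh
    by_cases ga : IsGLeg T v a
    · have gb : ¬ IsGLeg T v b := fun hh => hab (h1 a b ga hh)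
      have gc : ¬ IsGLeg T v c := fun hh => hac (h1 a c ga hh)
      exact ⟨b, c, hbc, hb, hc, key b hb gb, key c hc gc⟩
    · by_cases gb : IsGLeg T v b
      · have gc : ¬ IsGLeg T v c := fun hh => hbc (h1 b c gb hh)
        exact ⟨a, c, hac, ha, hc, key a ha ga, key c hc gc⟩
      · exact ⟨a, b, hab, ha, hb, key a ha ga, key b hb gb⟩
  · have hcard : 1 < ((T.neighborFinset v) \ {x, y}).card := by
      have h1 := Finset.card_le_card_sdiff_add_card (s := T.neighborFinset v) (t := {x, y})
      have h2 : ({x, y} : Finset V).card ≤ 2 := (Finset.card_insert_le _ _).trans (by simp)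
      have h3 : 4 ≤ (T.neighborFinset v).card := by
        rw [SimpleGraph.card_neighborFinset_eq_degree]; exact hdeg4
      omega
    obtain ⟨z1, hz1, z2, hz2, hne⟩ := Finset.one_lt_card.1 hcard
    have hmem : ∀ z ∈ T.neighborFinset v \ ({x, y} : Finset V),
        T.Adj v z ∧ ¬ IsGLeg T v z := by
      intro z hz
      rw [Finset.mem_sdiff, SimpleGraph.mem_neighborFinset] at hz
      obtain ⟨hadj, hnot⟩ := hz
      refine ⟨hadj, ?_⟩
      rintro (hstd | hmod)
      · rcases hall z hstd with rfl | rfl <;> simp at hnot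
      · exact hnomod z hmod
    obtain ⟨h1a, hg1⟩ := hmem z1 hz1
    obtain ⟨h2a, hg2⟩ := hmem z2 hz2
    exact ⟨z1, z2, hne, h1a, h2a, hrest z1 h1a hg1, hrest z2 h2a hg2⟩

private lemma exists_main (hT : T.IsTree) {v z : V} (hvz : T.Adj v z)
    (hex : ∃ w ∈ Branch T v z, IsRegularCore T w) :
    ∃ w ∈ Branch T v z, IsMainCore T w := by
  obtain ⟨w0, hw0B, hw0⟩ := hex
  obtain ⟨w, hwS, hwmax⟩ := Set.exists_max_image {u | u ∈ Branch T v z ∧ IsRegularCore T u}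
      (fun u => T.dist v u) (Set.toFinite _) ⟨w0, hw0B, hw0⟩
  obtain ⟨hwB, hwreg⟩ := hwS
  refine ⟨w, hwB, hwreg, ?_⟩
  intro hmin
  obtain ⟨y1, y2, hne, ha1, ha2, he1, he2⟩ := minor_needs hT hmin
  have hvw : w ≠ v := fun hh => self_not_mem_branch (hh ▸ hwB)
  obtain ⟨y0, hy0adj, hy0⟩ := exists_branch_mem hT hvw
  have main : ∀ y : V, T.Adj w y → y ≠ y0 →
      (∃ c ∈ Branch T w y, IsRegularCore T c) → False := by
    rintro y hy hyne ⟨c, hcB, hcreg⟩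
    have hvnot : v ∉ Branch T w y := fun hh => branch_disjoint hT hy hy0adj hyne hh hy0
    obtain ⟨hcvz, hlt⟩ := branch_trans hT hvz hwB hy hvnot hcB
    have := hwmax c ⟨hcvz, hcreg⟩
    omega
  by_cases hcase : y1 = y0
  · exact main y2 ha2 (by rw [← hcase]; exact hne.symm) he2
  · exact main y1 ha1 hcase he1

end TreeAux

/-- a tree with a minor core has at least two main cores. -/
theorem minor_core_implies_two_main_cores
    (T : SimpleGraph V) [DecidableRel T.Adj] (hT : T.IsTree)
    (h : ∃ v : V, IsMinorCore T v) :
    ∃ v w : V, v ≠ w ∧ IsMainCore T v ∧ IsMainCore T w := by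
  obtain ⟨v, hv⟩ := h
  obtain ⟨z1, z2, hz, ha1, ha2, he1, he2⟩ := minor_needs hT hv
  obtain ⟨w1, hw1B, hw1⟩ := exists_main hT ha1 he1
  obtain ⟨w2, hw2B, hw2⟩ := exists_main hT ha2 he2
  refine ⟨w1, w2, ?_, hw1, hw2⟩
  rintro rfl
  exact branch_disjoint hT ha1 ha2 hz hw1B hw2B
end
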